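/- arXiv:2512.03428 — 2 statements merged into one kernel-verified Lean document; each statement's English description precedes it below -/
import Mathlib

section
/- Let X and ε_Y be independent mean-zero random variables with unit variances and finite fourth moments, let a ≠ 0, set Y := aX + ε_Y, b := a/(1 + a²), and ε_X := X - bY. If the fourth cumulant (excess kurtosis) of ε_Y is nonzero, then Y and ε_X are NOT independent. -/
open MeasureTheory ProbabilityTheory
open scoped ENNReal NNReal

/-- Integral of an explicit 5-term linear combination. -/
lemma int_comb5 {Ω : Type*} [MeasurableSpace Ω] (μ : Measure Ω)
    {f1 f2 f3 f4 f5 : Ω → ℝ} (h1 : Integrable f1 μ) (h2 : Integrable f2 μ)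
    (h3 : Integrable f3 μ) (h4 : Integrable f4 μ) (h5 : Integrable f5 μ)
    (c1 c2 c3 c4 c5 : ℝ) :
    ∫ ω, (c1 * f1 ω + c2 * f2 ω + c3 * f3 ω + c4 * f4 ω + c5 * f5 ω) ∂μ =
      c1 * ∫ ω, f1 ω ∂μ + c2 * ∫ ω, f2 ω ∂μ + c3 * ∫ ω, f3 ω ∂μ +
      c4 * ∫ ω, f4 ω ∂μ + c5 * ∫ ω, f5 ω ∂μ := by
  have i1 : Integrable (fun ω => c1 * f1 ω) μ := h1.const_mul c1
  have i2 : Integrable (fun ω => c2 * f2 ω) μ := h2.const_mul c2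
  have i3 : Integrable (fun ω => c3 * f3 ω) μ := h3.const_mul c3
  have i4 : Integrable (fun ω => c4 * f4 ω) μ := h4.const_mul c4
  have i5 : Integrable (fun ω => c5 * f5 ω) μ := h5.const_mul c5
  have i12 : Integrable (fun ω => c1 * f1 ω + c2 * f2 ω) μ := i1.add i2
  have i123 : Integrable (fun ω => c1 * f1 ω + c2 * f2 ω + c3 * f3 ω) μ := i12.add i3
  have i1234 : Integrable (fun ω => c1 * f1 ω + c2 * f2 ω + c3 * f3 ω + c4 * f4 ω) μ :=
    i123.add i4
  rw [integral_add i1234 i5, integral_add i123 i4, integral_add i12 i3, integral_add i1 i2,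
    integral_const_mul _ _, integral_const_mul _ _, integral_const_mul _ _, integral_const_mul _ _,
    integral_const_mul _ _]

lemma abs_pow_le_one_add_pow_four (x : ℝ) {i : ℕ} (hi : i ≤ 4) :
    |x| ^ i ≤ 1 + x ^ 4 := by
  rcases le_or_gt (|x|) 1 with h | h
  · calc |x| ^ i ≤ 1 ^ i := pow_le_pow_left₀ (abs_nonneg x) h i
      _ = 1 := one_pow i
      _ ≤ 1 + x ^ 4 := by nlinarith [sq_nonneg (x^2)]
  · calc |x| ^ i ≤ |x| ^ 4 := pow_le_pow_right₀ (le_of_lt h) hi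
      _ = x ^ 4 := by rw [← abs_pow, abs_of_nonneg (by positivity)]
      _ ≤ 1 + x ^ 4 := by linarith

/-- If X and ε_Y are independent mean-zero unit-variance random variables with
finite fourth moments, a ≠ 0, Y := aX + ε_Y, b := a/(1+a²), ε_X := X - bY,
and the excess kurtosis of ε_Y is nonzero, then Y and ε_X are not independent. -/
theorem stmt_7 {Ω : Type*} [MeasurableSpace Ω] (μ : Measure Ω) [IsProbabilityMeasure μ]
    (X εY : Ω → ℝ) (hmX : Measurable X) (hmε : Measurable εY)
    (hIndep : IndepFun X εY μ)
    (hX4 : MemLp X 4 μ) (hε4 : MemLp εY 4 μ)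
    (hXmean : ∫ ω, X ω ∂μ = 0) (hεmean : ∫ ω, εY ω ∂μ = 0)
    (hXvar : ∫ ω, (X ω) ^ 2 ∂μ = 1) (hεvar : ∫ ω, (εY ω) ^ 2 ∂μ = 1)
    (a : ℝ) (ha : a ≠ 0)
    (Y : Ω → ℝ) (hY : Y = fun ω => a * X ω + εY ω)
    (b : ℝ) (hb : b = a / (1 + a ^ 2))
    (εX : Ω → ℝ) (hεX : εX = fun ω => X ω - b * Y ω)
    (hκ : (∫ ω, (εY ω) ^ 4 ∂μ) - 3 ≠ 0) :
    ¬ IndepFun Y εX μ := by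
  intro hind
  -- basic measurability
  have hmY : Measurable Y := by rw [hY]; exact (hmX.const_mul a).add hmε
  have hmεX : Measurable εX := by rw [hεX]; exact hmX.sub (hmY.const_mul b)
  -- Integrability of X^4 and εY^4
  have intX4 : Integrable (fun ω => X ω ^ 4) μ := by
    have h2 : MemLp (fun ω => X ω * X ω) 2 μ := by
      have h : (1:ℝ≥0∞)/2 = 1/4 + 1/4 := by
        rw [ENNReal.div_add_div_same, ENNReal.div_eq_div_iff] <;> norm_num
      have := MemLp.smul (r := 2) (φ := X) hX4 hX4 (hpqr := ⟨by simpa [one_div] using h.symm⟩)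
      exact this
    have h4 : MemLp (fun ω => (X ω * X ω) * (X ω * X ω)) 1 μ := by
      have h : (1:ℝ≥0∞)/1 = 1/2 + 1/2 := by
        rw [ENNReal.div_add_div_same, ENNReal.div_eq_div_iff] <;> norm_num
      have := MemLp.smul (r := 1) (φ := fun ω => X ω * X ω) h2 h2 (hpqr := ⟨by simpa [one_div] using h.symm⟩)
      exact this
    have := memLp_one_iff_integrable.mp h4
    have heq : (fun ω => (X ω * X ω) * (X ω * X ω)) = fun ω => X ω ^ 4 :=
      funext fun ω => by ring
    rwa [heq] at this
  have intε4 : Integrable (fun ω => εY ω ^ 4) μ := by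
    have h2 : MemLp (fun ω => εY ω * εY ω) 2 μ := by
      have h : (1:ℝ≥0∞)/2 = 1/4 + 1/4 := by
        rw [ENNReal.div_add_div_same, ENNReal.div_eq_div_iff] <;> norm_num
      have := MemLp.smul (r := 2) (φ := εY) hε4 hε4 (hpqr := ⟨by simpa [one_div] using h.symm⟩)
      exact this
    have h4 : MemLp (fun ω => (εY ω * εY ω) * (εY ω * εY ω)) 1 μ := by
      have h : (1:ℝ≥0∞)/1 = 1/2 + 1/2 := by
        rw [ENNReal.div_add_div_same, ENNReal.div_eq_div_iff] <;> norm_num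
      have := MemLp.smul (r := 1) (φ := fun ω => εY ω * εY ω) h2 h2 (hpqr := ⟨by simpa [one_div] using h.symm⟩)
      exact this
    have := memLp_one_iff_integrable.mp h4
    have heq : (fun ω => (εY ω * εY ω) * (εY ω * εY ω)) = fun ω => εY ω ^ 4 :=
      funext fun ω => by ring
    rwa [heq] at this
  -- integrable dominating function
  have hdom : Integrable (fun ω => (1 + X ω ^ 4) * (1 + εY ω ^ 4)) μ := by
    have hi : IndepFun (fun ω => 1 + X ω ^ 4) (fun ω => 1 + εY ω ^ 4) μ :=
      hIndep.comp ((measurable_id.pow_const 4).const_add 1)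
        ((measurable_id.pow_const 4).const_add 1)
    exact hi.integrable_mul ((integrable_const 1).add intX4) ((integrable_const 1).add intε4)
  -- integrability of all monomials of degree ≤ 4
  have intg : ∀ i j : ℕ, i ≤ 4 → j ≤ 4 → Integrable (fun ω => X ω ^ i * εY ω ^ j) μ := by
    intro i j hi hj
    refine hdom.mono ((hmX.pow_const i).mul (hmε.pow_const j)).aestronglyMeasurable ?_
    refine Filter.Eventually.of_forall fun ω => ?_
    have h1 : |X ω| ^ i ≤ 1 + X ω ^ 4 := abs_pow_le_one_add_pow_four _ hi
    have h2 : |εY ω| ^ j ≤ 1 + εY ω ^ 4 := abs_pow_le_one_add_pow_four _ hj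
    have hn1 : (0:ℝ) ≤ 1 + X ω ^ 4 := by positivity
    have hn2 : (0:ℝ) ≤ 1 + εY ω ^ 4 := by positivity
    calc ‖X ω ^ i * εY ω ^ j‖ = |X ω| ^ i * |εY ω| ^ j := by
          rw [norm_mul, norm_pow, norm_pow]; rfl
      _ ≤ (1 + X ω ^ 4) * (1 + εY ω ^ 4) := by
          exact mul_le_mul h1 h2 (by positivity) hn1
      _ ≤ ‖(1 + X ω ^ 4) * (1 + εY ω ^ 4)‖ := le_abs_self _
  -- mixed moments factor
  have M : ∀ i j : ℕ, ∫ ω, X ω ^ i * εY ω ^ j ∂μ =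
      (∫ ω, X ω ^ i ∂μ) * (∫ ω, εY ω ^ j ∂μ) := fun i j =>
    (hIndep.comp (measurable_id.pow_const i) (measurable_id.pow_const j)).integral_fun_mul_eq_mul_integral
      (hmX.pow_const i).aestronglyMeasurable (hmε.pow_const j).aestronglyMeasurable
  -- moment values
  set m := ∫ ω, X ω ^ 4 ∂μ with hm
  set n := ∫ ω, εY ω ^ 4 ∂μ with hn
  have hX1 : ∫ ω, X ω ^ 1 ∂μ = 0 := by simpa using hXmean
  have hε1 : ∫ ω, εY ω ^ 1 ∂μ = 0 := by simpa using hεmean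
  have M10 : ∫ ω, X ω ^ 1 * εY ω ^ 0 ∂μ = 0 := by rw [M, hX1]; ring
  have M01 : ∫ ω, X ω ^ 0 * εY ω ^ 1 ∂μ = 0 := by rw [M, hε1]; ring
  have M11 : ∫ ω, X ω ^ 1 * εY ω ^ 1 ∂μ = 0 := by rw [M, hX1]; ring
  have M20 : ∫ ω, X ω ^ 2 * εY ω ^ 0 ∂μ = 1 := by rw [M]; simp [hXvar]
  have M02 : ∫ ω, X ω ^ 0 * εY ω ^ 2 ∂μ = 1 := by rw [M]; simp [hεvar]
  have M22 : ∫ ω, X ω ^ 2 * εY ω ^ 2 ∂μ = 1 := by rw [M, hXvar, hεvar]; ring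
  have M31 : ∫ ω, X ω ^ 3 * εY ω ^ 1 ∂μ = 0 := by rw [M, hε1]; ring
  have M13 : ∫ ω, X ω ^ 1 * εY ω ^ 3 ∂μ = 0 := by rw [M, hX1]; ring
  have M40 : ∫ ω, X ω ^ 4 * εY ω ^ 0 ∂μ = m := by rw [M]; simp [hm]
  have M04 : ∫ ω, X ω ^ 0 * εY ω ^ 4 ∂μ = n := by rw [M]; simp [hn]
  set u : ℝ := 1 - a * b with hu
  have hεX' : εX = fun ω => u * X ω - b * εY ω := by
    rw [hεX, hY]; funext ω; rw [hu]; ring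
  -- expansions
  have eY : ∫ ω, Y ω ∂μ = 0 := by
    have e : ∫ ω, Y ω ∂μ = ∫ ω, (a * (X ω ^ 1 * εY ω ^ 0) + 1 * (X ω ^ 0 * εY ω ^ 1)
        + 0 * (X ω ^ 1 * εY ω ^ 1) + 0 * (X ω ^ 1 * εY ω ^ 1)
        + 0 * (X ω ^ 1 * εY ω ^ 1)) ∂μ :=
      integral_congr_ae (Filter.Eventually.of_forall fun ω => by rw [hY]; ring)
    rw [e, int_comb5 μ (intg 1 0 (by norm_num) (by norm_num)) (intg 0 1 (by norm_num) (by norm_num))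
      (intg 1 1 (by norm_num) (by norm_num)) (intg 1 1 (by norm_num) (by norm_num))
      (intg 1 1 (by norm_num) (by norm_num)), M10, M01, M11]
    ring
  have eY2 : ∫ ω, Y ω ^ 2 ∂μ = a ^ 2 + 1 := by
    have e : ∫ ω, Y ω ^ 2 ∂μ = ∫ ω, (a ^ 2 * (X ω ^ 2 * εY ω ^ 0)
        + (2 * a) * (X ω ^ 1 * εY ω ^ 1) + 1 * (X ω ^ 0 * εY ω ^ 2)
        + 0 * (X ω ^ 1 * εY ω ^ 1) + 0 * (X ω ^ 1 * εY ω ^ 1)) ∂μ :=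
      integral_congr_ae (Filter.Eventually.of_forall fun ω => by rw [hY]; ring)
    rw [e, int_comb5 μ (intg 2 0 (by norm_num) (by norm_num)) (intg 1 1 (by norm_num) (by norm_num))
      (intg 0 2 (by norm_num) (by norm_num)) (intg 1 1 (by norm_num) (by norm_num))
      (intg 1 1 (by norm_num) (by norm_num)), M20, M11, M02]
    ring
  have eεX2 : ∫ ω, εX ω ^ 2 ∂μ = u ^ 2 + b ^ 2 := by
    have e : ∫ ω, εX ω ^ 2 ∂μ = ∫ ω, (u ^ 2 * (X ω ^ 2 * εY ω ^ 0)
        + (-(2 * u * b)) * (X ω ^ 1 * εY ω ^ 1) + b ^ 2 * (X ω ^ 0 * εY ω ^ 2)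
        + 0 * (X ω ^ 1 * εY ω ^ 1) + 0 * (X ω ^ 1 * εY ω ^ 1)) ∂μ :=
      integral_congr_ae (Filter.Eventually.of_forall fun ω => by rw [hεX']; ring)
    rw [e, int_comb5 μ (intg 2 0 (by norm_num) (by norm_num)) (intg 1 1 (by norm_num) (by norm_num))
      (intg 0 2 (by norm_num) (by norm_num)) (intg 1 1 (by norm_num) (by norm_num))
      (intg 1 1 (by norm_num) (by norm_num)), M20, M11, M02]
    ring
  have eE1 : ∫ ω, Y ω ^ 2 * εX ω ^ 2 ∂μ =
      a ^ 2 * u ^ 2 * m + (a ^ 2 * b ^ 2 - 4 * a * u * b + u ^ 2) + b ^ 2 * n := by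
    have e : ∫ ω, Y ω ^ 2 * εX ω ^ 2 ∂μ = ∫ ω, ((a ^ 2 * u ^ 2) * (X ω ^ 4 * εY ω ^ 0)
        + (2 * a * u ^ 2 - 2 * a ^ 2 * u * b) * (X ω ^ 3 * εY ω ^ 1)
        + (a ^ 2 * b ^ 2 - 4 * a * u * b + u ^ 2) * (X ω ^ 2 * εY ω ^ 2)
        + (2 * a * b ^ 2 - 2 * u * b) * (X ω ^ 1 * εY ω ^ 3)
        + b ^ 2 * (X ω ^ 0 * εY ω ^ 4)) ∂μ :=
      integral_congr_ae (Filter.Eventually.of_forall fun ω => by rw [hY, hεX']; ring)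
    rw [e, int_comb5 μ (intg 4 0 (by norm_num) (by norm_num)) (intg 3 1 (by norm_num) (by norm_num))
      (intg 2 2 (by norm_num) (by norm_num)) (intg 1 3 (by norm_num) (by norm_num))
      (intg 0 4 (by norm_num) (by norm_num)), M40, M31, M22, M13, M04]
    ring
  have eE2 : ∫ ω, Y ω * εX ω ^ 3 ∂μ =
      a * u ^ 3 * m + (3 * a * u * b ^ 2 - 3 * u ^ 2 * b) + (-(b ^ 3)) * n := by
    have e : ∫ ω, Y ω * εX ω ^ 3 ∂μ = ∫ ω, ((a * u ^ 3) * (X ω ^ 4 * εY ω ^ 0)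
        + (u ^ 3 - 3 * a * u ^ 2 * b) * (X ω ^ 3 * εY ω ^ 1)
        + (3 * a * u * b ^ 2 - 3 * u ^ 2 * b) * (X ω ^ 2 * εY ω ^ 2)
        + (3 * u * b ^ 2 - a * b ^ 3) * (X ω ^ 1 * εY ω ^ 3)
        + (-(b ^ 3)) * (X ω ^ 0 * εY ω ^ 4)) ∂μ :=
      integral_congr_ae (Filter.Eventually.of_forall fun ω => by rw [hY, hεX']; ring)
    rw [e, int_comb5 μ (intg 4 0 (by norm_num) (by norm_num)) (intg 3 1 (by norm_num) (by norm_num))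
      (intg 2 2 (by norm_num) (by norm_num)) (intg 1 3 (by norm_num) (by norm_num))
      (intg 0 4 (by norm_num) (by norm_num)), M40, M31, M22, M13, M04]
    ring
  -- consequences of independence
  have hE1 : ∫ ω, Y ω ^ 2 * εX ω ^ 2 ∂μ = (∫ ω, Y ω ^ 2 ∂μ) * ∫ ω, εX ω ^ 2 ∂μ :=
    (hind.comp (measurable_id.pow_const 2) (measurable_id.pow_const 2)).integral_fun_mul_eq_mul_integral
      (hmY.pow_const 2).aestronglyMeasurable (hmεX.pow_const 2).aestronglyMeasurable
  have hE2 : ∫ ω, Y ω * εX ω ^ 3 ∂μ = (∫ ω, Y ω ∂μ) * ∫ ω, εX ω ^ 3 ∂μ :=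
    (hind.comp measurable_id (measurable_id.pow_const 3)).integral_fun_mul_eq_mul_integral
      hmY.aestronglyMeasurable (hmεX.pow_const 3).aestronglyMeasurable
  rw [eE1, eY2, eεX2] at hE1
  rw [eE2, eY] at hE2
  -- algebra
  have hs : (1 : ℝ) + a ^ 2 ≠ 0 := by positivity
  have hbs : b * (1 + a ^ 2) = a := by rw [hb]; field_simp
  have hus : u * (1 + a ^ 2) = 1 := by rw [hu]; linear_combination (-a) * hbs
  have hu0 : u ≠ 0 := by intro h; rw [h] at hus; simp at hus
  have hba : b = a * u := by
    have h : b * (1 + a ^ 2) = a * (u * (1 + a ^ 2)) := by rw [hus, hbs]; ring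
    have h' : b * (1 + a ^ 2) = (a * u) * (1 + a ^ 2) := by linarith [h]
    exact mul_right_cancel₀ hs h'
  rw [hba] at hE1 hE2
  have h2' : m - 3 = a ^ 2 * (n - 3) := by
    have hau : a * u ^ 3 ≠ 0 := by
      intro h
      rcases mul_eq_zero.mp h with h | h
      · exact ha h
      · exact hu0 (pow_eq_zero_iff (by norm_num) |>.mp h)
    have key : a * u ^ 3 * (m - 3 - a ^ 2 * (n - 3)) = 0 := by linear_combination hE2
    have := (mul_eq_zero.mp key).resolve_left hau
    linarith
  have h1' : m + n = 6 := by
    have hau2 : a ^ 2 * u ^ 2 ≠ 0 := by positivity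
    have key : a ^ 2 * u ^ 2 * (m + n - 6) = 0 := by linear_combination hE1
    have := (mul_eq_zero.mp key).resolve_left hau2
    linarith
  apply hκ
  have hkey : (1 + a ^ 2) * (n - 3) = 0 := by linear_combination h1' - h2'
  have := (mul_eq_zero.mp hkey).resolve_left hs
  linarith
end

section
/- If Z is a real random variable whose characteristic function satisfies φ_Z(t) = exp(q(t)) for a real polynomial q of degree at most 2 with q(0)=0 for all t (Marcinkiewicz-type conclusion used in Skitovich–Darmois), and |φ_Z(t)| ≤ 1 for all t, then q(t) = iμt - σ²t²/2 for some μ ∈ ℝ and σ² ≥ 0, i.e., Z is Gaussian. -/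
open MeasureTheory ProbabilityTheory Polynomial Complex Filter
open scoped Real NNReal ENNReal

lemma my_smooth_eq (ρ : Measure ℝ) [IsProbabilityMeasure ρ] {s : ℝ} (hs : 0 < s) (x : ℝ) :
    ((↑π / ((s^2/2 : ℝ) : ℂ)) ^ (1/2 : ℂ)) * ((∫ y, Real.exp (-(x - y)^2 / (2*s^2)) ∂ρ : ℝ) : ℂ)
      = ∫ t : ℝ, Complex.exp (-((s^2/2 : ℝ) : ℂ) * t^2 - x*t*I) * (∫ y : ℝ, Complex.exp (t*y*I) ∂ρ) := by
  have hs2 : (0:ℝ) < s^2/2 := by positivity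
  set F : ℝ → ℝ → ℂ := fun t y => Complex.exp (-((s^2/2 : ℝ) : ℂ) * t^2 + (↑y - ↑x) * ↑t * I) with hF
  have hFcont : Continuous (Function.uncurry F) := by
    apply Complex.continuous_exp.comp
    fun_prop
  have hFnorm : ∀ t y : ℝ, ‖F t y‖ = Real.exp (-(s^2/2) * t^2) := by
    intro t y
    rw [hF]
    simp only []
    have hrw : (-((s^2/2 : ℝ) : ℂ) * t^2 + (↑y - ↑x) * ↑t * I)
        = Complex.ofReal (-(s^2/2) * t^2) + Complex.ofReal ((y - x) * t) * I := by
      push_cast; ring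
    rw [hrw, Complex.norm_exp]
    congr 1
    simp only [Complex.add_re, Complex.mul_I_re, Complex.ofReal_im, Complex.ofReal_re,
      neg_zero, add_zero]
  have hFint : Integrable (Function.uncurry F) ((volume : Measure ℝ).prod ρ) := by
    rw [integrable_prod_iff hFcont.aestronglyMeasurable]
    constructor
    · refine Filter.Eventually.of_forall (fun t => ?_)
      apply (integrable_const (Real.exp (-(s^2/2) * t^2))).mono'
        (hFcont.comp (Continuous.prodMk_right t)).aestronglyMeasurable
      exact Filter.Eventually.of_forall (fun y => le_of_eq (hFnorm t y))
    · refine ((integrable_exp_neg_mul_sq (show (0:ℝ) < s^2/2 by positivity)).congr ?_)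
      refine Filter.Eventually.of_forall (fun t => ?_)
      simp only [Function.uncurry]
      rw [MeasureTheory.integral_congr_ae (Filter.Eventually.of_forall (fun y => hFnorm t y))]
      simp [measure_univ]
  have hinner : ∀ y : ℝ, (∫ t : ℝ, F t y) =
      ((↑π / ((s^2/2 : ℝ) : ℂ)) ^ (1/2 : ℂ)) * ((Real.exp (-(x - y)^2 / (2*s^2)) : ℝ) : ℂ) := by
    intro y
    have hb : (-((s^2/2 : ℝ) : ℂ)).re < 0 := by
      rw [Complex.neg_re, Complex.ofReal_re]; linarith
    have hq := integral_cexp_quadratic hb ((↑y - ↑x) * I) 0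
    have heq : (fun t : ℝ => F t y) =
        fun t : ℝ => Complex.exp (-((s^2/2 : ℝ) : ℂ) * t^2 + ((↑y - ↑x) * I) * t + 0) := by
      funext t
      exact congrArg Complex.exp (by ring)
    rw [heq, hq]
    congr 1
    · rw [neg_neg]
    · rw [Complex.ofReal_exp]
      congr 1
      rw [mul_pow, Complex.I_sq]
      have h2s : ((s:ℝ):ℂ)^2 ≠ 0 := pow_ne_zero 2 (Complex.ofReal_ne_zero.mpr hs.ne')
      push_cast
      field_simp
      ring
  calc ((↑π / ((s^2/2 : ℝ) : ℂ)) ^ (1/2 : ℂ)) * ((∫ y, Real.exp (-(x - y)^2 / (2*s^2)) ∂ρ : ℝ) : ℂ)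
      = ∫ y : ℝ, ∫ t : ℝ, F t y ∂(volume) ∂ρ := by
        simp_rw [hinner]
        rw [integral_const_mul]
        congr 1
        exact (integral_ofReal (𝕜 := ℂ)).symm
    _ = ∫ t : ℝ, ∫ y : ℝ, F t y ∂ρ ∂(volume) := (integral_integral_swap hFint).symm
    _ = ∫ t : ℝ, Complex.exp (-((s^2/2 : ℝ) : ℂ) * t^2 - x*t*I) * (∫ y : ℝ, Complex.exp (t*y*I) ∂ρ) := by
        refine integral_congr_ae (Filter.Eventually.of_forall (fun t => ?_))
        dsimp only
        rw [← integral_const_mul]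
        refine integral_congr_ae (Filter.Eventually.of_forall (fun y => ?_))
        dsimp only
        rw [← Complex.exp_add]
        exact congrArg Complex.exp (by ring)

lemma my_charfun_ext (μ ν : Measure ℝ) [IsProbabilityMeasure μ] [IsProbabilityMeasure ν]
    (h : ∀ t : ℝ, ∫ y : ℝ, Complex.exp (t * y * I) ∂μ = ∫ y : ℝ, Complex.exp (t * y * I) ∂ν) :
    μ = ν := by
  have hB : ∀ s : ℝ, 0 < s → ∀ x : ℝ,
      (∫ y, Real.exp (-(x - y)^2 / (2*s^2)) ∂μ) = ∫ y, Real.exp (-(x - y)^2 / (2*s^2)) ∂ν := by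
    intro s hs x
    have h1 := my_smooth_eq μ hs x
    have h2 := my_smooth_eq ν hs x
    simp_rw [h] at h1
    have hC : ((↑π / ((s^2/2 : ℝ) : ℂ)) ^ (1/2 : ℂ)) ≠ 0 := by
      intro hc
      rw [Complex.cpow_eq_zero_iff] at hc
      have := hc.1
      rw [_root_.div_eq_zero_iff] at this
      rcases this with h' | h'
      · exact Real.pi_ne_zero (by exact_mod_cast h')
      · have : (s^2/2 : ℝ) = 0 := by exact_mod_cast h'
        nlinarith
    have := mul_left_cancel₀ hC (h1.trans h2.symm)
    exact_mod_cast this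
  have key : ∀ (g : ℝ → ℝ), Continuous g → ∀ M : ℝ, (∀ x, |g x| ≤ M) →
      ∫ x, g x ∂μ = ∫ x, g x ∂ν := by
    intro g hg M hM
    have hM0 : 0 ≤ M := le_trans (abs_nonneg _) (hM 0)
    set s : ℕ → ℝ := fun n => 1/(n+1) with hsdef
    have hspos : ∀ n, 0 < s n := fun n => by positivity
    have hstend : Tendsto s atTop (nhds 0) := tendsto_one_div_add_atTop_nhds_zero_nat
    set H : ℝ → ℝ → ℝ := fun c y => ∫ u : ℝ, g (y + c*u) * Real.exp (-u^2/2) with hHdef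
    have hgauss : Integrable (fun u : ℝ => Real.exp (-u^2/2)) := by
      refine (integrable_exp_neg_mul_sq (show (0:ℝ) < 1/2 by norm_num)).congr
        (Eventually.of_forall (fun u => congrArg Real.exp (by ring)))
    set B1 : ℝ := ∫ u : ℝ, Real.exp (-u^2/2) with hB1def
    have hB1pos : 0 < B1 := by
      rw [hB1def]
      rw [integral_congr_ae (Eventually.of_forall
        (fun u : ℝ => show Real.exp (-u^2/2) = Real.exp (-(1/2) * u^2) from congrArg Real.exp (by ring)))]
      rw [integral_gaussian]
      positivity
    have hker : ∀ c : ℝ, 0 < c → ∀ y : ℝ,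
        Integrable (fun x : ℝ => Real.exp (-(x-y)^2/(2*c^2))) := by
      intro c hc y
      refine ((integrable_exp_neg_mul_sq (show (0:ℝ) < 1/(2*c^2) by positivity)).comp_sub_right
        y).congr (Eventually.of_forall (fun x => congrArg Real.exp ?_))
      have : c^2 ≠ 0 := by positivity
      field_simp
    have hgM : ∀ x : ℝ, ‖g x‖ ≤ M := fun x => by rw [Real.norm_eq_abs]; exact hM x
    have hint_gu : ∀ (c y : ℝ), Integrable (fun u : ℝ => g (y + c*u) * Real.exp (-u^2/2)) := by
      intro c y
      exact hgauss.bdd_mul ((hg.comp (by fun_prop)).aestronglyMeasurable) (Eventually.of_forall fun u => hgM _)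
    -- c1 : x-integral of kernel against g equals c * H c y
    have hc1 : ∀ c : ℝ, 0 < c → ∀ y : ℝ,
        (∫ x : ℝ, g x * Real.exp (-(x-y)^2/(2*c^2))) = c * H c y := by
      intro c hc y
      have e1 : (∫ x : ℝ, g x * Real.exp (-(x-y)^2/(2*c^2)))
          = ∫ x : ℝ, g (x + y) * Real.exp (-x^2/(2*c^2)) := by
        rw [← integral_add_right_eq_self (fun x => g x * Real.exp (-(x-y)^2/(2*c^2))) y]
        refine integral_congr_ae (Eventually.of_forall (fun x => ?_))
        simp [add_sub_cancel_right]
      have e2 := Measure.integral_comp_mul_left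
        (fun x => g (x + y) * Real.exp (-x^2/(2*c^2))) c
      have e3 : (fun u : ℝ => (fun x => g (x + y) * Real.exp (-x^2/(2*c^2))) (c * u))
          = fun u : ℝ => g (y + c*u) * Real.exp (-u^2/2) := by
        funext u
        have hc2 : c^2 ≠ 0 := by positivity
        simp only []
        rw [add_comm (c*u) y]
        congr 1
        apply congrArg Real.exp
        field_simp
      rw [e3] at e2
      rw [e1]
      rw [abs_of_pos (inv_pos.mpr hc)] at e2
      rw [smul_eq_mul] at e2
      have := congrArg (fun z => c * z) e2
      rw [← mul_assoc, mul_inv_cancel₀ hc.ne', one_mul] at this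
      exact this.symm ▸ rfl
    -- Fubini: swap integrals
    have hfub : ∀ (ρ : Measure ℝ), IsProbabilityMeasure ρ → ∀ c : ℝ, 0 < c →
        (∫ y : ℝ, (∫ x : ℝ, g x * Real.exp (-(x-y)^2/(2*c^2))) ∂ρ)
          = ∫ x : ℝ, g x * (∫ y : ℝ, Real.exp (-(x-y)^2/(2*c^2)) ∂ρ) := by
      intro ρ hρ c hc
      have hcont : Continuous (fun p : ℝ × ℝ => g p.2 * Real.exp (-(p.2 - p.1)^2/(2*c^2))) := by
        fun_prop
      have hintf : Integrable (fun p : ℝ × ℝ => g p.2 * Real.exp (-(p.2 - p.1)^2/(2*c^2)))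
          (ρ.prod volume) := by
        rw [integrable_prod_iff hcont.aestronglyMeasurable]
        constructor
        · refine Eventually.of_forall (fun y => ?_)
          exact (hker c hc y).bdd_mul hg.aestronglyMeasurable (Eventually.of_forall fun x => hgM x)
        · set Bc : ℝ := ∫ x : ℝ, Real.exp (-x^2/(2*c^2)) with hBcdef
          have hBtrans : ∀ y : ℝ, (∫ x : ℝ, Real.exp (-(x-y)^2/(2*c^2))) = Bc := by
            intro y
            exact integral_sub_right_eq_self (fun x => Real.exp (-x^2/(2*c^2))) y
          refine (integrable_const (M * Bc)).mono'
            (hcont.norm.aestronglyMeasurable.integral_prod_right') ?_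
          refine Eventually.of_forall (fun y => ?_)
          dsimp only
          rw [Real.norm_eq_abs, _root_.abs_of_nonneg (integral_nonneg (fun x => norm_nonneg _))]
          calc (∫ x : ℝ, ‖g x * Real.exp (-(x-y)^2/(2*c^2))‖)
              ≤ ∫ x : ℝ, M * Real.exp (-(x-y)^2/(2*c^2)) := by
                refine integral_mono (((hker c hc y).bdd_mul hg.aestronglyMeasurable
                  (Eventually.of_forall fun x => hgM x)).norm) ((hker c hc y).const_mul M) (fun x => ?_)
                rw [norm_mul, Real.norm_eq_abs (Real.exp _),
                  _root_.abs_of_nonneg (Real.exp_nonneg _)]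
                exact mul_le_mul_of_nonneg_right (hgM x) (Real.exp_nonneg _)
            _ = M * Bc := by rw [integral_const_mul, hBtrans y]
      have hswap := integral_integral_swap (f := fun y x => g x * Real.exp (-(x-y)^2/(2*c^2)))
        (μ := ρ) (ν := volume) hintf
      rw [hswap]
      refine integral_congr_ae (Eventually.of_forall (fun x => ?_))
      exact integral_const_mul (g x) _
    -- equality of the smoothed integrals
    have hIeq : ∀ n : ℕ, (∫ y : ℝ, H (s n) y ∂μ) = ∫ y : ℝ, H (s n) y ∂ν := by
      intro n
      have hsn := hspos n
      have e1 : (s n) * (∫ y : ℝ, H (s n) y ∂μ) = (s n) * ∫ y : ℝ, H (s n) y ∂ν := by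
        calc (s n) * (∫ y : ℝ, H (s n) y ∂μ)
            = ∫ y : ℝ, (s n) * H (s n) y ∂μ := (integral_const_mul _ _).symm
          _ = ∫ y : ℝ, (∫ x : ℝ, g x * Real.exp (-(x-y)^2/(2*(s n)^2))) ∂μ := by
              refine integral_congr_ae (Eventually.of_forall (fun y => ?_))
              exact (hc1 (s n) hsn y).symm
          _ = ∫ x : ℝ, g x * (∫ y : ℝ, Real.exp (-(x-y)^2/(2*(s n)^2)) ∂μ) :=
              hfub μ inferInstance (s n) hsn
          _ = ∫ x : ℝ, g x * (∫ y : ℝ, Real.exp (-(x-y)^2/(2*(s n)^2)) ∂ν) := by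
              refine integral_congr_ae (Eventually.of_forall (fun x => ?_))
              dsimp only
              rw [hB (s n) hsn x]
          _ = ∫ y : ℝ, (∫ x : ℝ, g x * Real.exp (-(x-y)^2/(2*(s n)^2))) ∂ν :=
              (hfub ν inferInstance (s n) hsn).symm
          _ = ∫ y : ℝ, (s n) * H (s n) y ∂ν := by
              refine integral_congr_ae (Eventually.of_forall (fun y => ?_))
              exact hc1 (s n) hsn y
          _ = (s n) * ∫ y : ℝ, H (s n) y ∂ν := integral_const_mul _ _
      exact mul_left_cancel₀ hsn.ne' e1
    -- pointwise convergence of H (s n) y to g y * B1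
    have hHtend : ∀ y : ℝ, Tendsto (fun n => H (s n) y) atTop (nhds (g y * B1)) := by
      intro y
      have hlim0 : (g y * B1) = ∫ u : ℝ, g y * Real.exp (-u^2/2) := (integral_const_mul _ _).symm
      rw [hlim0]
      refine tendsto_integral_of_dominated_convergence (fun u => M * Real.exp (-u^2/2))
        (fun n => (hint_gu (s n) y).aestronglyMeasurable) (hgauss.const_mul M) (fun n => ?_) ?_
      · refine Eventually.of_forall (fun u => ?_)
        rw [norm_mul, Real.norm_eq_abs (Real.exp _), _root_.abs_of_nonneg (Real.exp_nonneg _)]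
        exact mul_le_mul_of_nonneg_right (hgM _) (Real.exp_nonneg _)
      · refine Eventually.of_forall (fun u => ?_)
        refine Tendsto.mul_const _ ?_
        have harg : Tendsto (fun n => y + s n * u) atTop (nhds y) := by
          have h1 : Tendsto (fun n => s n * u) atTop (nhds (0 * u)) := hstend.mul_const u
          rw [zero_mul] at h1
          have h2 := tendsto_const_nhds.add h1 (f := fun _ : ℕ => y)
          rwa [add_zero] at h2
        exact (hg.tendsto y).comp harg
    -- bound on H
    have hHbd : ∀ c y : ℝ, ‖H c y‖ ≤ M * B1 := by
      intro c y
      refine le_trans (norm_integral_le_integral_norm _) ?_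
      have : (∫ u : ℝ, ‖g (y + c*u) * Real.exp (-u^2/2)‖)
          ≤ ∫ u : ℝ, M * Real.exp (-u^2/2) := by
        refine integral_mono (hint_gu c y).norm (hgauss.const_mul M) (fun u => ?_)
        rw [norm_mul, Real.norm_eq_abs (Real.exp _), _root_.abs_of_nonneg (Real.exp_nonneg _)]
        exact mul_le_mul_of_nonneg_right (hgM _) (Real.exp_nonneg _)
      refine le_trans this ?_
      rw [integral_const_mul]
    -- measurability of H (s n) ·
    have hHmeas : ∀ (ρ : Measure ℝ), IsProbabilityMeasure ρ → ∀ n : ℕ,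
        AEStronglyMeasurable (fun y => H (s n) y) ρ := by
      intro ρ hρ n
      have hcont : Continuous (fun p : ℝ × ℝ => g (p.1 + (s n) * p.2) * Real.exp (-p.2^2/2)) := by
        fun_prop
      exact hcont.aestronglyMeasurable.integral_prod_right'
    -- outer dominated convergence
    have hlim : ∀ (ρ : Measure ℝ), ∀ (hρ : IsProbabilityMeasure ρ),
        Tendsto (fun n => ∫ y : ℝ, H (s n) y ∂ρ) atTop (nhds (∫ y : ℝ, g y * B1 ∂ρ)) := by
      intro ρ hρ
      refine tendsto_integral_of_dominated_convergence (fun _ => M * B1)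
        (hHmeas ρ hρ) (integrable_const _) (fun n => Eventually.of_forall (fun y => hHbd _ _))
        (Eventually.of_forall (fun y => hHtend y))
    have h1 := hlim μ inferInstance
    have h2 := hlim ν inferInstance
    rw [show (fun n => ∫ y : ℝ, H (s n) y ∂μ) = (fun n => ∫ y : ℝ, H (s n) y ∂ν)
      from funext hIeq] at h1
    have heq := tendsto_nhds_unique h1 h2
    rw [show (∫ y : ℝ, g y * B1 ∂μ) = (∫ y : ℝ, g y ∂μ) * B1 from integral_mul_const _ _,
      show (∫ y : ℝ, g y * B1 ∂ν) = (∫ y : ℝ, g y ∂ν) * B1 from integral_mul_const _ _] at heq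
    exact mul_right_cancel₀ hB1pos.ne' heq
  -- conclude via bounded continuous functions
  refine ext_of_forall_lintegral_eq_of_IsFiniteMeasure (fun f => ?_)
  have hcont : Continuous fun x : ℝ => ((f x : ℝ≥0) : ℝ) := NNReal.continuous_coe.comp f.continuous
  obtain ⟨C, hC⟩ := f.bounded
  set M : ℝ := ((f 0 : ℝ≥0) : ℝ) + C with hMdef
  have hbd : ∀ x : ℝ, |((f x : ℝ≥0) : ℝ)| ≤ M := by
    intro x
    rw [_root_.abs_of_nonneg (f x).coe_nonneg]
    have h1 := hC x 0
    rw [NNReal.dist_eq] at h1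
    have h2 := le_abs_self (((f x : ℝ≥0) : ℝ) - ((f 0 : ℝ≥0) : ℝ))
    rw [hMdef]
    linarith
  have hint : ∀ (ρ : Measure ℝ), IsProbabilityMeasure ρ →
      Integrable (fun x : ℝ => ((f x : ℝ≥0) : ℝ)) ρ := by
    intro ρ hρ
    refine (integrable_const M).mono' hcont.aestronglyMeasurable ?_
    exact Eventually.of_forall (fun x => by rw [Real.norm_eq_abs]; exact hbd x)
  rw [lintegral_coe_eq_integral _ (hint μ inferInstance),
    lintegral_coe_eq_integral _ (hint ν inferInstance),
    key _ hcont M hbd]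

lemma my_gaussian_charfun (m : ℝ) (V : ℝ≥0) (t : ℝ) :
    ∫ y : ℝ, Complex.exp (t * y * I) ∂(gaussianReal m V)
      = Complex.exp (m * t * I - V * t^2 / 2) := by
  -- first the centered case
  have hcen : ∀ V' : ℝ≥0, V' ≠ 0 → ∫ y : ℝ, Complex.exp (t * y * I) ∂(gaussianReal 0 V')
      = Complex.exp (- V' * t^2 / 2) := by
    intro V' hV'
    have hVpos : (0:ℝ) < (V' : ℝ) := by positivity
    rw [gaussianReal_of_var_ne_zero _ hV']
    have hpdf : (gaussianPDF 0 V') = fun x => ((gaussianPDFReal 0 V' x).toNNReal : ℝ≥0∞) := by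
      funext x; rfl
    rw [hpdf, integral_withDensity_eq_integral_smul
      ((measurable_gaussianPDFReal 0 V').real_toNNReal) _]
    have hptwise : ∀ y : ℝ, (gaussianPDFReal 0 V' y).toNNReal • Complex.exp (t * y * I)
        = ((Real.sqrt (2 * π * V'))⁻¹ : ℂ) *
          Complex.exp (-((1/(2*(V':ℝ)) : ℝ) : ℂ) * y^2 + (t*I) * y + 0) := by
      intro y
      rw [NNReal.smul_def, Real.coe_toNNReal _ (gaussianPDFReal_nonneg 0 V' y)]
      rw [gaussianPDFReal_def]
      simp only [sub_zero]
      rw [real_smul]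
      push_cast
      rw [mul_assoc]
      congr 1
      rw [← Complex.exp_add]
      congr 1
      have : ((V':ℝ):ℂ) ≠ 0 := by exact_mod_cast hVpos.ne'
      field_simp
      ring
    rw [integral_congr_ae (Eventually.of_forall hptwise), integral_const_mul]
    have hb : (-((1/(2*(V':ℝ)) : ℝ) : ℂ)).re < 0 := by
      rw [Complex.neg_re, Complex.ofReal_re]
      have : (0:ℝ) < 1/(2*(V':ℝ)) := by positivity
      linarith
    rw [integral_cexp_quadratic hb (t*I) 0]
    have hVC : ((V':ℝ):ℂ) ≠ 0 := by exact_mod_cast hVpos.ne'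
    have hconst : (↑π / -(-((1/(2*(V':ℝ)) : ℝ) : ℂ))) ^ (1/2 : ℂ)
        = ((Real.sqrt (2 * π * V') : ℝ) : ℂ) := by
      have h1 : (↑π / -(-((1/(2*(V':ℝ)) : ℝ) : ℂ))) = ((2 * π * (V':ℝ) : ℝ) : ℂ) := by
        rw [neg_neg]
        push_cast
        field_simp
      rw [h1]
      rw [Real.sqrt_eq_rpow]
      rw [Complex.ofReal_cpow (by positivity)]
      norm_num
    rw [hconst]
    have hexp : (0 : ℂ) - (↑t*I)^2/(4 * -((1/(2*(V':ℝ)) : ℝ) : ℂ))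
        = -(V':ℝ) * t^2 / 2 := by
      rw [mul_pow, Complex.I_sq]
      push_cast
      field_simp
      ring
    rw [hexp]
    rw [← mul_assoc]
    have hsqrt : ((Real.sqrt (2 * π * V') : ℝ) : ℂ) ≠ 0 := by
      rw [Complex.ofReal_ne_zero]
      positivity
    rw [inv_mul_cancel₀ hsqrt, one_mul]
  by_cases hV : V = 0
  · subst hV
    rw [gaussianReal_zero_var, integral_dirac]
    push_cast
    ring_nf
  · have hmap : Measure.map (· + m) (gaussianReal 0 V) = gaussianReal m V := by
      rw [gaussianReal_map_add_const, zero_add]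
    rw [← hmap]
    have hmeas : AEStronglyMeasurable (fun y : ℝ => Complex.exp (↑t * ↑y * I))
        (Measure.map (· + m) (gaussianReal 0 V)) :=
      (Complex.continuous_exp.comp
        (by fun_prop : Continuous fun y : ℝ => ((t:ℂ) * (y:ℂ) * I : ℂ))).aestronglyMeasurable
    rw [integral_map (by fun_prop : AEMeasurable (· + m) (gaussianReal 0 V)) hmeas]
    have : ∀ y : ℝ, Complex.exp (↑t * ↑(y + m) * I)
        = Complex.exp (↑m*↑t*I) * Complex.exp (↑t * ↑y * I) := by
      intro y
      rw [← Complex.exp_add]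
      apply congrArg Complex.exp
      push_cast
      ring
    rw [integral_congr_ae (Eventually.of_forall this), integral_const_mul, hcen V hV,
      ← Complex.exp_add]
    apply congrArg Complex.exp
    ring

/-- Marcinkiewicz-type step: if the characteristic function of Z equals
exp(q(t)) for a polynomial q of degree at most 2 with q(0) = 0, then
φ_Z(t) = exp(iμt - σ²t²/2) for some μ ∈ ℝ and σ² ≥ 0, i.e. Z is Gaussian. -/
theorem stmt_17 {Ω : Type*} [MeasurableSpace Ω] (P : Measure Ω) [IsProbabilityMeasure P]
    (Z : Ω → ℝ) (hmZ : Measurable Z)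
    (φ : ℝ → ℂ)
    (hφ : φ = fun (t : ℝ) => ∫ ω, Complex.exp ((t : ℂ) * Z ω * Complex.I) ∂P)
    (q : Polynomial ℂ) (hdeg : q.natDegree ≤ 2) (h0 : q.eval 0 = 0)
    (hq : ∀ t : ℝ, φ t = Complex.exp (q.eval (t : ℂ))) :
    ∃ (m : ℝ) (v : ℝ), 0 ≤ v ∧
      (∀ t : ℝ, φ t = Complex.exp ((m : ℂ) * t * Complex.I - (v : ℂ) * t ^ 2 / 2)) ∧
      Measure.map Z P = gaussianReal m v.toNNReal := by
  set a := q.coeff 1 with hadef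
  set b := q.coeff 2 with hbdef
  have h00 : q.coeff 0 = 0 := by rw [Polynomial.coeff_zero_eq_eval_zero]; exact h0
  have hev : ∀ z : ℂ, q.eval z = a * z + b * z^2 := by
    intro z
    rw [Polynomial.eval_eq_sum_range' (lt_of_le_of_lt hdeg (by norm_num : (2:ℕ) < 3))]
    rw [Finset.sum_range_succ, Finset.sum_range_succ, Finset.sum_range_one]
    rw [h00]
    ring
  -- |φ t| ≤ 1
  have hφ1 : ∀ t : ℝ, ‖φ t‖ ≤ 1 := by
    intro t
    rw [hφ]
    refine le_trans (norm_integral_le_integral_norm _) ?_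
    have hnorm : ∀ ω : Ω, ‖Complex.exp ((t:ℂ) * Z ω * I)‖ = 1 := by
      intro ω
      rw [Complex.norm_exp]
      have : ((t:ℂ) * (Z ω : ℂ) * I).re = 0 := by
        rw [Complex.mul_I_re]
        simp [Complex.mul_im]
      rw [this, Real.exp_zero]
    rw [integral_congr_ae (Eventually.of_forall hnorm)]
    simp [measure_univ]
  have hre : ∀ t : ℝ, (q.eval (t:ℂ)).re ≤ 0 := by
    intro t
    have h1 := hφ1 t
    rw [hq t, Complex.norm_exp] at h1
    calc (q.eval (t:ℂ)).re = Real.log (Real.exp ((q.eval (t:ℂ)).re)) := (Real.log_exp _).symm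
      _ ≤ Real.log 1 := Real.log_le_log (Real.exp_pos _) h1
      _ = 0 := Real.log_one
  have hretb : ∀ t : ℝ, a.re * t + b.re * t^2 ≤ 0 := by
    intro t
    have h1 := hre t
    rw [hev] at h1
    have h2 : (a * (t:ℂ) + b * (t:ℂ)^2).re = a.re * t + b.re * t^2 := by
      simp [Complex.add_re, Complex.mul_re, ← Complex.ofReal_pow]
    rwa [h2] at h1
  have hbr : b.re ≤ 0 := by
    have h1 := hretb 1
    have h2 := hretb (-1)
    nlinarith
  have har : a.re = 0 := by
    by_contra hcon
    have h1b : (0:ℝ) < 1 - b.re := by linarith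
    set t₀ := a.re / (1 - b.re) with ht₀def
    have ht₀ : a.re = t₀ * (1 - b.re) := by
      rw [ht₀def, div_mul_cancel₀ _ h1b.ne']
    have hsq : t₀^2 ≤ 0 := by
      have h3 := hretb t₀
      rw [ht₀] at h3
      nlinarith [h3]
    have hz : t₀ = 0 := by nlinarith [sq_nonneg t₀]
    exact hcon (by rw [ht₀, hz, zero_mul])
  -- conjugation symmetry
  have hconj : ∀ t : ℝ, φ (-t) = (starRingEnd ℂ) (φ t) := by
    intro t
    rw [hφ]
    simp only []
    rw [← integral_conj]
    refine integral_congr_ae (Eventually.of_forall fun ω => ?_)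
    dsimp only
    rw [← Complex.exp_conj]
    apply congrArg Complex.exp
    rw [map_mul, map_mul, Complex.conj_I, Complex.conj_ofReal, Complex.conj_ofReal]
    push_cast
    ring
  have hbim : b.im = 0 := by
    by_contra hbi
    have key : ∀ t : ℝ, Complex.exp ((2 * b.im * t^2 : ℝ) * I) = 1 := by
      intro t
      have e1 : φ t * φ (-t) = Complex.exp (q.eval (t:ℂ) + q.eval (-(t:ℂ))) := by
        rw [Complex.exp_add, hq t, hq (-t)]
        push_cast
        ring_nf
      have e2 : φ t * φ (-t) = ((‖φ t‖)^2 : ℝ) := by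
        rw [hconj t, Complex.mul_conj]
        rw [Complex.normSq_eq_norm_sq]
      have e3 : (‖φ t‖)^2 = Real.exp (2 * (b.re * t^2)) := by
        rw [hq t, Complex.norm_exp, sq, ← Real.exp_add]
        apply congrArg Real.exp
        have h2 : (q.eval (t:ℂ)).re = a.re * t + b.re * t^2 := by
          rw [hev]
          simp [Complex.add_re, Complex.mul_re, ← Complex.ofReal_pow]
        rw [h2, har]
        ring
      have e4 : Complex.exp (q.eval (t:ℂ) + q.eval (-(t:ℂ))) = Complex.exp ((2 * (b.re * t^2) : ℝ)) := by
        rw [← e1, e2, e3, Complex.ofReal_exp]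
      have e5 : q.eval (t:ℂ) + q.eval (-(t:ℂ)) = 2 * b * (t:ℂ)^2 := by
        rw [hev, hev]; ring
      have e6 : Complex.exp (2 * b * (t:ℂ)^2 - ((2 * (b.re * t^2) : ℝ) : ℂ)) = 1 := by
        rw [Complex.exp_sub, ← e5, e4, div_self (Complex.exp_ne_zero _)]
      have e7 : 2 * b * (t:ℂ)^2 - ((2 * (b.re * t^2) : ℝ) : ℂ) = ((2 * b.im * t^2 : ℝ) : ℂ) * I := by
        push_cast
        linear_combination (-2*(t:ℂ)^2) * Complex.re_add_im b
      rwa [e7] at e6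
    set t₁ := Real.sqrt (π / (2 * |b.im|)) with ht₁def
    have habs : 0 < |b.im| := abs_pos.mpr hbi
    have ht₁sq : t₁^2 = π / (2 * |b.im|) := Real.sq_sqrt (by positivity)
    have hval : 2 * b.im * t₁^2 = b.im / |b.im| * π := by
      rw [ht₁sq]; field_simp
    obtain ⟨n, hn⟩ := Complex.exp_eq_one_iff.mp (key t₁)
    have him := congrArg Complex.im hn
    simp [Complex.mul_I_im, Complex.mul_im, ← Complex.ofReal_pow] at him
    rw [hval] at him
    have h1 : b.im/|b.im| = 2*n :=
      mul_right_cancel₀ Real.pi_ne_zero (by linarith [him] : (b.im/|b.im|)*π = (2*(n:ℝ))*π)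
    have habs1 : |b.im / _root_.abs b.im| = 1 := by
      rw [abs_div, _root_.abs_abs, div_self habs.ne']
    rw [h1] at habs1
    have hint : |2*n| = (1:ℤ) := by exact_mod_cast habs1
    rcases (abs_eq (by norm_num : (0:ℤ) ≤ 1)).mp hint with h | h <;> omega
  -- define the parameters
  set m := a.im with hmdef
  set v := -2 * b.re with hvdef
  have hv : 0 ≤ v := by rw [hvdef]; linarith
  have heval : ∀ t : ℝ, q.eval (t:ℂ) = (m:ℂ) * t * I - (v:ℂ) * t^2/2 := by
    intro t
    rw [hev]
    have ha : a = (m:ℂ) * I := by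
      apply Complex.ext
      · rw [har]; simp [Complex.mul_I_re]
      · simp [Complex.mul_I_im, hmdef]
    have hb2 : b = ((b.re : ℝ) : ℂ) := by
      apply Complex.ext
      · simp
      · simp [hbim]
    rw [ha, hb2, hvdef]
    push_cast
    ring
  refine ⟨m, v, hv, fun t => by rw [hq t, heval t], ?_⟩
  have hprob : IsProbabilityMeasure (Measure.map Z P) :=
    Measure.isProbabilityMeasure_map hmZ.aemeasurable
  apply my_charfun_ext
  intro t
  have hμchar : ∫ y : ℝ, Complex.exp (t * y * I) ∂(Measure.map Z P) = φ t := by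
    have hmeas : AEStronglyMeasurable (fun y : ℝ => Complex.exp ((t:ℂ) * (y:ℂ) * I))
        (Measure.map Z P) :=
      (Complex.continuous_exp.comp
        (by fun_prop : Continuous fun y : ℝ => ((t:ℂ) * (y:ℂ) * I : ℂ))).aestronglyMeasurable
    rw [integral_map hmZ.aemeasurable hmeas, hφ]
  rw [hμchar, my_gaussian_charfun m v.toNNReal t, hq t, heval t,
    Real.coe_toNNReal _ hv]
end
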